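/- Let λ₁, λ₂ > 0 and let k > 0 be a root of j₁, i.e. sin(k)/k² − cos(k)/k = 0. Let ψ_k(y) := (sin(k|y|)/(k²|y|³) − cos(k|y|)/(k|y|²)) y on ℝ³ ∖ {0}. Then for every y ∈ ℝ³ with |y| = 1 (so that the outward unit normal to the unit ball at y is n = y), the stress tensor satisfies Σ(ψ_k)(y) · y = (2λ₁ + λ₂) sin(k) · y. That is, ψ_k satisfies the scalar Neumann boundary condition Σ(ψ_k) n = q n on the unit sphere with the constant q = (2λ₁ + λ₂) sin(k). -/

import Mathlib

open Real

/-- The radial vector field `ψ_k(y) = (sin(k|y|)/(k²|y|³) − cos(k|y|)/(k|y|²)) y`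
on `ℝ³ ∖ {0}`. -/
noncomputable def psi (k : ℝ) (y : EuclideanSpace ℝ (Fin 3)) : EuclideanSpace ℝ (Fin 3) :=
  (Real.sin (k * ‖y‖) / (k ^ 2 * ‖y‖ ^ 3) - Real.cos (k * ‖y‖) / (k * ‖y‖ ^ 2)) • y

/-- The `i`-th partial derivative of a scalar function on `ℝ³`. -/
noncomputable def pd (i : Fin 3) (g : EuclideanSpace ℝ (Fin 3) → ℝ)
    (y : EuclideanSpace ℝ (Fin 3)) : ℝ :=
  fderiv ℝ g y (EuclideanSpace.single i 1)

/-- The linear–elastic stress tensor `Σ(v) = 2λ₁ ε(v) + λ₂ div(v) Id`, entrywise: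
`Σ(v)_{ij} = λ₁ (∂_j v_i + ∂_i v_j) + λ₂ (div v) δ_{ij}`. -/
noncomputable def stress (l1 l2 : ℝ) (v : EuclideanSpace ℝ (Fin 3) → EuclideanSpace ℝ (Fin 3))
    (y : EuclideanSpace ℝ (Fin 3)) (i j : Fin 3) : ℝ :=
  l1 * (pd j (fun z => v z i) y + pd i (fun z => v z j) y) +
    l2 * (∑ m : Fin 3, pd m (fun z => v z m) y) * (if i = j then (1 : ℝ) else 0)

noncomputable def fscal (k r : ℝ) : ℝ :=
  Real.sin (k * r) / (k ^ 2 * r ^ 3) - Real.cos (k * r) / (k * r ^ 2)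

lemma fscal_hasDerivAt (k : ℝ) (hk : 0 < k)
    (hroot : Real.sin k / k ^ 2 - Real.cos k / k = 0) :
    HasDerivAt (fscal k) (Real.sin k) 1 := by
  have hk0 : k ≠ 0 := hk.ne'
  have hlin : HasDerivAt (fun r : ℝ => k * r) (k * 1) 1 := (hasDerivAt_id 1).const_mul k
  have hsin : HasDerivAt (fun r : ℝ => Real.sin (k * r)) (Real.cos (k * 1) * (k * 1)) 1 :=
    (Real.hasDerivAt_sin (k * 1)).comp 1 hlin
  have hcos : HasDerivAt (fun r : ℝ => Real.cos (k * r)) (-Real.sin (k * 1) * (k * 1)) 1 :=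
    (Real.hasDerivAt_cos (k * 1)).comp 1 hlin
  have hd1 : HasDerivAt (fun r : ℝ => k ^ 2 * r ^ 3) (k ^ 2 * (3 * 1 ^ 2)) 1 := by
    simpa using (hasDerivAt_pow 3 (1 : ℝ)).const_mul (k ^ 2)
  have hd2 : HasDerivAt (fun r : ℝ => k * r ^ 2) (k * (2 * 1 ^ 1)) 1 := by
    simpa using (hasDerivAt_pow 2 (1 : ℝ)).const_mul k
  have h1 := hsin.div hd1 (by positivity)
  have h2 := hcos.div hd2 (by positivity)
  have h := h1.sub h2
  convert h using 1
  · rfl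
  · rfl
  · rfl
  have hr : Real.sin k = Real.cos k * k := by
    field_simp at hroot
    exact mul_right_cancel₀ hk0 (by linear_combination k * hroot)
  simp only [mul_one, one_pow, pow_one]
  field_simp
  linear_combination 3 * hr

lemma hasFDerivAt_norm_unit (y : EuclideanSpace ℝ (Fin 3)) (hy : ‖y‖ = 1) :
    HasFDerivAt (fun z : EuclideanSpace ℝ (Fin 3) => ‖z‖) (innerSL ℝ y) y := by
  have h1 : HasFDerivAt (fun z : EuclideanSpace ℝ (Fin 3) => ‖z‖ ^ 2)
      (2 • innerSL ℝ y) y := (hasStrictFDerivAt_norm_sq y).hasFDerivAt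
  have h2 := h1.sqrt (by rw [hy]; norm_num)
  have heq : (fun z : EuclideanSpace ℝ (Fin 3) => Real.sqrt (‖z‖ ^ 2)) =
      fun z => ‖z‖ := funext fun z => Real.sqrt_sq (norm_nonneg z)
  rw [heq] at h2
  convert h2 using 1
  · rfl
  rw [hy]
  ext w
  simp

lemma pd_psi (k : ℝ) (hk : 0 < k)
    (hroot : Real.sin k / k ^ 2 - Real.cos k / k = 0)
    (y : EuclideanSpace ℝ (Fin 3)) (hy : ‖y‖ = 1) (i j : Fin 3) :
    pd j (fun z => psi k z i) y = Real.sin k * y i * y j := by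
  have hd : HasDerivAt (fscal k) (Real.sin k) ‖y‖ := by
    rw [hy]; exact fscal_hasDerivAt k hk hroot
  have hF : HasFDerivAt (fun z : EuclideanSpace ℝ (Fin 3) => fscal k ‖z‖)
      (Real.sin k • innerSL ℝ y) y :=
    hd.comp_hasFDerivAt y (hasFDerivAt_norm_unit y hy)
  have hproj : HasFDerivAt (fun z : EuclideanSpace ℝ (Fin 3) => z i)
      (EuclideanSpace.proj (𝕜 := ℝ) i) y :=
    (EuclideanSpace.proj (𝕜 := ℝ) (i : Fin 3) :
      EuclideanSpace ℝ (Fin 3) →L[ℝ] ℝ).hasFDerivAt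
  have hmul := hF.mul hproj
  have hfun : (fun z : EuclideanSpace ℝ (Fin 3) => psi k z i) =
      fun z => fscal k ‖z‖ * z i := by
    funext z; simp [psi, fscal, smul_eq_mul]
  have hf1 : fscal k ‖y‖ = 0 := by
    rw [hy]; simpa [fscal] using hroot
  rw [pd, hfun, show (fun z : EuclideanSpace ℝ (Fin 3) => fscal k ‖z‖ * z i) =
    ((fun z => fscal k ‖z‖) * fun z => z i) from rfl, hmul.fderiv]
  simp [hf1, EuclideanSpace.inner_single_right, real_inner_comm]
  ring

/-- If `k > 0` is a root of `j₁`, i.e. `sin(k)/k² − cos(k)/k = 0`, then on the unit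
sphere (where the outward unit normal at `y` is `n = y`) the stress of `ψ_k`
satisfies the scalar Neumann condition `Σ(ψ_k)(y) · y = (2λ₁ + λ₂) sin(k) · y`. -/
theorem statement_7 (l1 l2 k : ℝ) (hl1 : 0 < l1) (hl2 : 0 < l2) (hk : 0 < k)
    (hroot : Real.sin k / k ^ 2 - Real.cos k / k = 0) :
    ∀ y : EuclideanSpace ℝ (Fin 3), ‖y‖ = 1 → ∀ i : Fin 3,
      (∑ j : Fin 3, stress l1 l2 (psi k) y i j * y j) =
        (2 * l1 + l2) * Real.sin k * y i := by
  intro y hy i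
  have hsum : ∑ m : Fin 3, y m * y m = 1 := by
    have h : (inner ℝ y y : ℝ) = 1 := by
      rw [real_inner_self_eq_norm_sq, hy, one_pow]
    rw [PiLp.inner_apply] at h
    simpa [RCLike.inner_apply, conj_trivial, sq] using h
  simp only [stress, pd_psi k hk hroot y hy]
  have hterm : ∀ j : Fin 3,
      (l1 * (Real.sin k * y i * y j + Real.sin k * y j * y i) +
        l2 * (∑ m : Fin 3, Real.sin k * y m * y m) * (if i = j then (1:ℝ) else 0)) * y j =
      2 * l1 * Real.sin k * y i * (y j * y j) +
        l2 * Real.sin k * (if i = j then y j else 0) := by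
    intro j
    have hS : (∑ m : Fin 3, Real.sin k * y m * y m) = Real.sin k := by
      simp_rw [mul_assoc, ← Finset.mul_sum, hsum, mul_one]
    rw [hS]
    by_cases h : i = j <;> simp [h] <;> ring
  rw [Finset.sum_congr rfl fun j _ => hterm j, Finset.sum_add_distrib,
    ← Finset.mul_sum, hsum]
  simp
  ring
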